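/- Under the same hypotheses (1-D Fanno system with M ≠ 1), the density satisfies ρ' = μρM²/(M²−1) and the pressure satisfies p' = μγpM²/(M²−1). -/

import Mathlib

theorem fanno_density_pressure_ode
    (γ μ L : ℝ) (hγ : 1 < γ) (hμ : 0 < μ)
    (ρ u p ρ' u' p' : ℝ → ℝ)
    (hρpos : ∀ x ∈ Set.Icc 0 L, 0 < ρ x)
    (hupos : ∀ x ∈ Set.Icc 0 L, 0 < u x)
    (hppos : ∀ x ∈ Set.Icc 0 L, 0 < p x)
    (hρ : ∀ x ∈ Set.Icc 0 L, HasDerivAt ρ (ρ' x) x)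
    (hu : ∀ x ∈ Set.Icc 0 L, HasDerivAt u (u' x) x)
    (hp : ∀ x ∈ Set.Icc 0 L, HasDerivAt p (p' x) x)
    (hM : ∀ x ∈ Set.Icc 0 L, ρ x * (u x) ^ 2 / (γ * p x) ≠ 1)
    (hmass : ∀ x ∈ Set.Icc 0 L, HasDerivAt (fun y => ρ y * u y) 0 x)
    (hmom : ∀ x ∈ Set.Icc 0 L,
      HasDerivAt (fun y => ρ y * (u y) ^ 2 + p y) (-(μ * ρ x * (u x) ^ 2)) x)
    (hener : ∀ x ∈ Set.Icc 0 L,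
      HasDerivAt (fun y => ρ y * ((u y) ^ 2 / 2 + γ * p y / ((γ - 1) * ρ y)) * u y)
        (-(μ * ρ x * (u x) ^ 3)) x) :
    ∀ x ∈ Set.Icc 0 L,
      ρ' x = μ * ρ x * (ρ x * (u x) ^ 2 / (γ * p x)) /
        (ρ x * (u x) ^ 2 / (γ * p x) - 1) ∧
      p' x = μ * γ * p x * (ρ x * (u x) ^ 2 / (γ * p x)) /
        (ρ x * (u x) ^ 2 / (γ * p x) - 1) := by
  intro x hx
  have ha := hρpos x hx
  have hb := hupos x hx
  have hc := hppos x hx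
  have hγ0 : γ ≠ 0 := by linarith
  have hγ1 : γ - 1 ≠ 0 := by linarith
  have hane : ρ x ≠ 0 := ne_of_gt ha
  have hbne : u x ≠ 0 := ne_of_gt hb
  have hcne : p x ≠ 0 := ne_of_gt hc
  have hgc : γ * p x ≠ 0 := mul_ne_zero hγ0 hcne
  have hne2 : ρ x * u x ^ 2 - γ * p x ≠ 0 := by
    intro h
    apply hM x hx
    field_simp
    linarith
  -- mass equation
  have e1 : ρ' x * u x + ρ x * u' x = 0 :=
    ((hρ x hx).mul (hu x hx)).unique (hmass x hx)
  -- momentum equation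
  have e2 : ρ' x * u x ^ 2 + ρ x * (2 * u x ^ 1 * u' x) + p' x
      = -(μ * ρ x * u x ^ 2) :=
    (((hρ x hx).mul ((hu x hx).pow 2)).add (hp x hx)).unique (hmom x hx)
  have hq : p' x = ρ' x * u x ^ 2 - μ * ρ x * u x ^ 2 := by
    linear_combination e2 - 2 * u x * e1
  -- energy equation
  have hden : (γ - 1) * ρ x ≠ 0 := mul_ne_zero hγ1 hane
  have h4 := ((hp x hx).const_mul γ).div ((hρ x hx).const_mul (γ - 1)) hden
  have h5 := (((hu x hx).pow 2).div_const 2).add h4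
  have h6 := ((hρ x hx).mul h5).mul (hu x hx)
  have e3 := h6.unique (hener x hx)
  simp only [Pi.add_apply, Pi.mul_apply, Pi.div_apply, Pi.pow_apply, Nat.cast_ofNat, Nat.reduceSub, pow_one] at e3
  field_simp at e3
  have hnz4 : (4 : ℝ) * (γ - 1) ^ 3 * ρ x ^ 4 ≠ 0 := by positivity
  have e3' : (γ - 1) * (ρ' x * u x ^ 3 + 3 * ρ x * u x ^ 2 * u' x)
      + 2 * γ * (p' x * u x + p x * u' x) = -(2 * (γ - 1) * μ * ρ x * u x ^ 3) := by
    apply mul_left_cancel₀ hnz4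
    linear_combination 4 * (γ - 1) ^ 3 * ρ x ^ 3 * e3
  have hr : ρ' x * (ρ x * u x ^ 2 - γ * p x) = μ * ρ x ^ 2 * u x ^ 2 := by
    have h2b : (2 : ℝ) * u x ≠ 0 := by positivity
    apply mul_left_cancel₀ h2b
    linear_combination ρ x * e3' + (-(3 * (γ - 1) * ρ x * u x ^ 2) - 2 * γ * p x) * e1
      + (-(2 * γ * ρ x * u x)) * hq
  have hpr : p' x * (ρ x * u x ^ 2 - γ * p x) = μ * γ * ρ x * u x ^ 2 * p x := by
    linear_combination (ρ x * u x ^ 2 - γ * p x) * hq + u x ^ 2 * hr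
  have hMden : ρ x * u x ^ 2 / (γ * p x) - 1 ≠ 0 := sub_ne_zero.mpr (hM x hx)
  constructor
  · rw [eq_div_iff hMden]
    field_simp
    linear_combination hr
  · rw [eq_div_iff hMden]
    field_simp
    linear_combination hpr
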